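/- Let x have length n ≥ 1 and let ρ be a real number with −1/n ≤ ρ < 0. Then every minimal absent word w of x with |w| > 2 is ρ-avoided in x; indeed std(w) ≤ −1/n ≤ ρ. -/

import Mathlib

/-- The observed frequency `f(w)`: the number of starting positions at which
the word `w` occurs in the word `x` (occurrences may overlap). -/
def occ {α : Type*} [DecidableEq α] (x w : List α) : ℕ :=
  ((Finset.range (x.length + 1)).filter (fun i => (x.drop i).take w.length = w)).card

/-- The expected frequency `E(w)` of `w` in `x`:
`E(w) = f(w_p)·f(w_s)/f(w_i)` if `f(w_i) > 0`, and `E(w) = 0` otherwise,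
where `w_p = w.dropLast` is the longest proper prefix of `w`,
`w_s = w.tail` is the longest proper suffix of `w`, and
`w_i = w.tail.dropLast` is the infix of `w` obtained by deleting its
first and last letters. -/
noncomputable def expFreq {α : Type*} [DecidableEq α] (x w : List α) : ℝ :=
  if 0 < occ x w.tail.dropLast then
    ((occ x w.dropLast : ℝ) * (occ x w.tail : ℝ)) / (occ x w.tail.dropLast : ℝ)
  else 0

/-- The standard deviation `std(w) = (f(w) − E(w)) / max(√E(w), 1)`. -/
noncomputable def stdDev {α : Type*} [DecidableEq α] (x w : List α) : ℝ :=
  ((occ x w : ℝ) - expFreq x w) / max (Real.sqrt (expFreq x w)) 1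

/-- `w` is a minimal absent word of `x`: `w` is absent from `x`
(`f(w) = 0`) and every proper factor of `w` occurs in `x`. -/
def IsMAW {α : Type*} [DecidableEq α] (x w : List α) : Prop :=
  occ x w = 0 ∧ ∀ v : List α, v <:+: w → v ≠ w → 0 < occ x v

/-- Let `x` have length `n ≥ 1` and let `ρ` satisfy `−1/n ≤ ρ < 0`. Then every
minimal absent word `w` of `x` with `|w| > 2` is `ρ`-avoided in `x`; indeed
`std(w) ≤ −1/n ≤ ρ`. -/

lemma occ_le_length {α : Type*} [DecidableEq α] (x w : List α) (hw : w ≠ []) :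
    occ x w ≤ x.length := by
  unfold occ
  have hsub : ((Finset.range (x.length + 1)).filter
      (fun i => (x.drop i).take w.length = w)) ⊆ Finset.range x.length := by
    intro i hi
    simp only [Finset.mem_filter, Finset.mem_range] at hi ⊢
    rcases hi with ⟨h1, h2⟩
    by_contra h
    have hi' : i = x.length := by omega
    subst hi'
    rw [List.drop_length, List.take_nil] at h2
    exact hw h2.symm
  calc _ ≤ (Finset.range x.length).card := Finset.card_le_card hsub
    _ = x.length := Finset.card_range _

theorem stmt_11 {α : Type*} [DecidableEq α] (x : List α) (hn : 1 ≤ x.length)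
    (ρ : ℝ) (hρ₁ : -(1 / (x.length : ℝ)) ≤ ρ) (hρ₂ : ρ < 0)
    (w : List α) (hw : 2 < w.length) (hmaw : IsMAW x w) :
    stdDev x w ≤ -(1 / (x.length : ℝ)) ∧ stdDev x w ≤ ρ := by
  obtain ⟨h0, hmin⟩ := hmaw
  have hn1 : (1:ℝ) ≤ (x.length : ℝ) := by exact_mod_cast hn
  have hnpos : (0:ℝ) < (x.length : ℝ) := by linarith
  have hlp : w.dropLast.length = w.length - 1 := List.length_dropLast
  have hls : w.tail.length = w.length - 1 := List.length_tail
  have hli : w.tail.dropLast.length = w.length - 2 := by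
    rw [List.length_dropLast, hls]; omega
  have hp : 0 < occ x w.dropLast := by
    refine hmin _ (List.dropLast_prefix w).isInfix ?_
    intro h; apply_fun List.length at h; rw [hlp] at h; omega
  have hs : 0 < occ x w.tail := by
    refine hmin _ (List.tail_suffix w).isInfix ?_
    intro h; apply_fun List.length at h; rw [hls] at h; omega
  have hiInf : w.tail.dropLast <:+: w :=
    (List.dropLast_prefix w.tail).isInfix.trans (List.tail_suffix w).isInfix
  have hm : 0 < occ x w.tail.dropLast := by
    refine hmin _ hiInf ?_
    intro h; apply_fun List.length at h; rw [hli] at h; omega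
  have hmne : w.tail.dropLast ≠ [] := by
    intro h; rw [h] at hli; simp at hli; omega
  have hmle : occ x w.tail.dropLast ≤ x.length := occ_le_length x _ hmne
  set P : ℝ := (occ x w.dropLast : ℝ) with hP
  set S : ℝ := (occ x w.tail : ℝ) with hS
  set M : ℝ := (occ x w.tail.dropLast : ℝ) with hM
  have hP1 : 1 ≤ P := by rw [hP]; exact_mod_cast Nat.one_le_iff_ne_zero.mpr hp.ne'
  have hS1 : 1 ≤ S := by rw [hS]; exact_mod_cast Nat.one_le_iff_ne_zero.mpr hs.ne'
  have hM1 : 1 ≤ M := by rw [hM]; exact_mod_cast Nat.one_le_iff_ne_zero.mpr hm.ne'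
  have hMn : M ≤ (x.length : ℝ) := by rw [hM]; exact_mod_cast hmle
  have hMpos : 0 < M := by linarith
  have hE : expFreq x w = P * S / M := by rw [expFreq, if_pos hm]
  have hEpos : 0 < expFreq x w := by
    rw [hE]; positivity
  have hE1n : 1 / (x.length : ℝ) ≤ expFreq x w := by
    rw [hE, div_le_div_iff₀ hnpos hMpos]
    have hPS : (1:ℝ) ≤ P * S := by nlinarith
    nlinarith
  have hstd : stdDev x w = (0 - expFreq x w) / max (Real.sqrt (expFreq x w)) 1 := by
    rw [stdDev, h0]; norm_num
  have key : stdDev x w ≤ -(1 / (x.length : ℝ)) := by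
    rw [hstd]
    rcases le_total (Real.sqrt (expFreq x w)) 1 with h | h
    · rw [max_eq_right h]; rw [div_one]; linarith
    · rw [max_eq_left h]
      have hsq : 0 < Real.sqrt (expFreq x w) := by linarith
      rw [div_le_iff₀ hsq]
      have hms : Real.sqrt (expFreq x w) * Real.sqrt (expFreq x w) = expFreq x w :=
        Real.mul_self_sqrt hEpos.le
      have h1n : 1 / (x.length : ℝ) ≤ 1 := by
        rw [div_le_one hnpos]; linarith
      nlinarith
  exact ⟨key, key.trans hρ₁⟩
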